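/- Let σ : Σ → Σ be a subshift of finite type, φ : Σ → ℚ^n a locally constant constraint, and A : Σ → ℝ a Walters potential. Let r ∈ φ_*(M_σ) ∩ ℚ^n, and suppose ν is an ergodic σ-invariant probability measure with φ_*(ν) = r with respect to which φ is joint recurrent. Then for each ε > 0 there exists a periodic probability measure μ with φ_*(μ) = r such that |∫A dν − ∫A dμ| < ε. -/

import Mathlib

open MeasureTheory Filter Topology Set

/-- The left shift on the full shift space `{1,…,N}^ℕ`. -/
def Shift {N : ℕ} : (ℕ → Fin N) → (ℕ → Fin N) := fun x i => x (i + 1)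

/-- `S` is a subshift of finite type: it is the set of sequences all of whose transitions
are allowed by some transition relation `M`. -/
def IsSubshiftFT {N : ℕ} (S : Set (ℕ → Fin N)) : Prop :=
  ∃ M : Fin N → Fin N → Prop, S = {x | ∀ i, M (x i) (x (i + 1))}

/-- The Birkhoff sum `S_k f` for the shift. -/
def birkhoff {N : ℕ} {E : Type*} [AddCommMonoid E] (k : ℕ) (f : (ℕ → Fin N) → E)
    (x : ℕ → Fin N) : E :=
  ∑ j ∈ Finset.range k, f (Shift^[j] x)

open Classical in
/-- The metric `d(x,y) = λ^{min{j : x_j ≠ y_j}}` on the shift space. -/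
noncomputable def sdist {N : ℕ} (lam : ℝ) (x y : ℕ → Fin N) : ℝ :=
  if x = y then 0 else lam ^ sInf {j | x j ≠ y j}

/-- `f` is a Walters function on `S` (for the metric with parameter `λ`): there is
`H : ℝ₊ → ℝ₊ ∪ {+∞}` increasing, null and continuous at zero, such that `d_k(x,y) ≤ s`
implies `|S_k f(x) - S_k f(y)| ≤ H(s)`. -/
def IsWalters {N : ℕ} (S : Set (ℕ → Fin N)) (lam : ℝ) (f : (ℕ → Fin N) → ℝ) : Prop :=
  ∃ H : ℝ → ENNReal, Monotone H ∧ H 0 = 0 ∧ Tendsto H (nhdsWithin 0 (Ioi 0)) (nhds 0) ∧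
    ∀ s : ℝ, 0 ≤ s → ∀ k : ℕ, 0 < k → ∀ x ∈ S, ∀ y ∈ S,
      (∀ j < k, sdist lam (Shift^[j] x) (Shift^[j] y) ≤ s) →
      ENNReal.ofReal |birkhoff k f x - birkhoff k f y| ≤ H s

/-- A function on the shift space is locally constant if it depends on finitely many
coordinates. -/
def LocallyConstantFn {N : ℕ} {E : Type*} (f : (ℕ → Fin N) → E) : Prop :=
  ∃ j : ℕ, ∀ x y : ℕ → Fin N, (∀ i ≤ j, x i = y i) → f x = f y

/-- The set `M_σ` of shift-invariant Borel probability measures giving full mass to the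
subshift `S`. -/
def MS {N : ℕ} (S : Set (ℕ → Fin N)) : Set (ProbabilityMeasure (ℕ → Fin N)) :=
  {μ | (μ : Measure (ℕ → Fin N)).map Shift = (μ : Measure (ℕ → Fin N)) ∧
    (μ : Measure (ℕ → Fin N)) S = 1}

/-- `μ` is a periodic probability measure of the subshift `S`: the uniform probability
measure on the orbit of a periodic point of `S`. -/
def IsPeriodicMeasure {N : ℕ} (S : Set (ℕ → Fin N)) (μ : ProbabilityMeasure (ℕ → Fin N)) :
    Prop :=
  ∃ z ∈ S, ∃ M : ℕ, 0 < M ∧ Shift^[M] z = z ∧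
    (μ : Measure (ℕ → Fin N)) =
      (M : ENNReal)⁻¹ • ∑ j ∈ Finset.range M, Measure.dirac (Shift^[j] z)

/-- `f` is joint recurrent with respect to the measure `ν`: for every measurable `D`,
`ν(Ξ(D)) = ν(D)`, where `Ξ(D)` is the set of `z ∈ D` such that for every `ε > 0` there is
`L > 0` with `σ^L(z) ∈ D` and `‖S_L f(z) - L f_*(ν)‖ < ε`. -/
def JointRec {N n : ℕ} (f : (ℕ → Fin N) → EuclideanSpace ℝ (Fin n))
    (ν : Measure (ℕ → Fin N)) : Prop :=
  ∀ D : Set (ℕ → Fin N), MeasurableSet D →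
    ν {z ∈ D | ∀ ε > 0, ∃ L : ℕ, 0 < L ∧ Shift^[L] z ∈ D ∧
      ‖birkhoff L f z - (L : ℝ) • ∫ x, f x ∂ν‖ < ε} = ν D


set_option linter.unusedSectionVars false
set_option linter.unnecessarySimpa false
set_option linter.unnecessarySeqFocus false
set_option linter.unusedVariables false
set_option maxHeartbeats 1000000
set_option linter.unusedSectionVars false
set_option linter.unnecessarySimpa false
set_option linter.unnecessarySeqFocus false

section ErgodicLite
variable {α : Type*} [MeasurableSpace α] {μ : Measure α} [IsProbabilityMeasure μ]
variable {T : α → α}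

/-- Birkhoff sum for a general map. -/
def bsum (T : α → α) (g : α → ℝ) (k : ℕ) (x : α) : ℝ :=
  ∑ j ∈ Finset.range k, g (T^[j] x)

lemma bsum_zero (g : α → ℝ) (x : α) : bsum T g 0 x = 0 := by simp [bsum]

lemma bsum_succ' (g : α → ℝ) (k : ℕ) (x : α) :
    bsum T g (k + 1) x = g x + bsum T g k (T x) := by
  unfold bsum
  rw [Finset.sum_range_succ']
  simp [Function.iterate_succ_apply, add_comm]

lemma measurable_bsum (hT : Measurable T) {g : α → ℝ} (hg : Measurable g) (k : ℕ) :
    Measurable (bsum T g k) := by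
  apply Finset.measurable_sum
  intro j _
  exact hg.comp (hT.iterate j)

lemma bsum_abs_le {g : α → ℝ} {C : ℝ} (hC : ∀ x, |g x| ≤ C) (k : ℕ) (x : α) :
    |bsum T g k x| ≤ k * C := by
  calc |bsum T g k x| ≤ ∑ j ∈ Finset.range k, |g (T^[j] x)| := Finset.abs_sum_le_sum_abs _ _
    _ ≤ ∑ j ∈ Finset.range k, C := Finset.sum_le_sum fun j _ => hC _
    _ = k * C := by simp [mul_comm]

lemma integrable_of_bdd {f : α → ℝ} {C : ℝ} (hf : Measurable f) (hC : ∀ x, |f x| ≤ C) :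
    Integrable f μ :=
  (integrable_const C).mono' hf.aestronglyMeasurable (ae_of_all _ fun x => by
    simpa using hC x)

/-- Running maximum of Birkhoff sums: `bmax T g n x = max_{0 ≤ k ≤ n} S_k g x`. -/
def bmax (T : α → α) (g : α → ℝ) : ℕ → α → ℝ
  | 0 => fun _ => 0
  | n + 1 => fun x => max (bmax T g n x) (bsum T g (n + 1) x)

lemma bmax_nonneg (g : α → ℝ) (n : ℕ) (x : α) : 0 ≤ bmax T g n x := by
  induction n with
  | zero => simp [bmax]
  | succ n ih => exact le_trans ih (le_max_left _ _)

lemma measurable_bmax (hT : Measurable T) {g : α → ℝ} (hg : Measurable g) (n : ℕ) :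
    Measurable (bmax T g n) := by
  induction n with
  | zero => simpa [bmax] using measurable_const
  | succ n ih => exact ih.max (measurable_bsum hT hg (n + 1))

lemma bmax_abs_le {g : α → ℝ} {C : ℝ} (hC : ∀ x, |g x| ≤ C) (hC0 : 0 ≤ C) (n : ℕ) (x : α) :
    |bmax T g n x| ≤ n * C := by
  rw [abs_le]
  constructor
  · have := bmax_nonneg (T := T) g n x
    nlinarith [Nat.cast_nonneg (α := ℝ) n]
  · induction n with
    | zero => simp [bmax]
    | succ n ih =>
      refine max_le (le_trans ih ?_) (le_trans (le_abs_self _) (le_trans (bsum_abs_le hC _ _) le_rfl)) <;>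
      · push_cast; nlinarith

lemma bsum_le_bmax (g : α → ℝ) {k n : ℕ} (hk : k ≤ n) (x : α) :
    bsum T g k x ≤ bmax T g n x := by
  induction n with
  | zero =>
    interval_cases k
    simp [bmax, bsum_zero]
  | succ n ih =>
    rcases Nat.lt_or_ge k (n + 1) with h | h
    · exact le_trans (ih (by omega)) (le_max_left _ _)
    · have : k = n + 1 := by omega
      subst this
      exact le_max_right _ _

lemma bmax_eq_bsum_of_pos {g : α → ℝ} {n : ℕ} {x : α} (h : 0 < bmax T g n x) :
    ∃ k, 1 ≤ k ∧ k ≤ n ∧ bmax T g n x = bsum T g k x := by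
  induction n with
  | zero => simp [bmax] at h
  | succ n ih =>
    rcases le_or_gt (bsum T g (n + 1) x) (bmax T g n x) with h' | h'
    · have hmax : bmax T g (n + 1) x = bmax T g n x := max_eq_left h'
      rw [hmax] at h ⊢
      obtain ⟨k, h1, h2, h3⟩ := ih h
      exact ⟨k, h1, by omega, h3⟩
    · exact ⟨n + 1, by omega, le_rfl, max_eq_right h'.le⟩

lemma bmax_key {g : α → ℝ} {n : ℕ} {x : α} (h : 0 < bmax T g n x) :
    bmax T g n x ≤ g x + bmax T g n (T x) := by
  obtain ⟨k, h1, h2, h3⟩ := bmax_eq_bsum_of_pos h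
  rw [h3]
  obtain ⟨m, rfl⟩ : ∃ m, k = m + 1 := ⟨k - 1, by omega⟩
  rw [bsum_succ']
  exact add_le_add_right (le_refl _) _ |>.trans
    (add_le_add_right (bsum_le_bmax g (by omega) _) _)

/-- The maximal ergodic theorem (Garsia's proof). -/
lemma maximal_ergodic (hT : MeasurePreserving T μ μ) {g : α → ℝ} (hg : Measurable g)
    {C : ℝ} (hC : ∀ x, |g x| ≤ C) (n : ℕ) :
    0 ≤ ∫ x in {y | 0 < bmax T g n y}, g x ∂μ := by
  obtain ⟨x0, -⟩ : Set.Nonempty (Set.univ : Set α) :=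
    MeasureTheory.nonempty_of_measure_ne_zero (by simp : μ Set.univ ≠ 0)
  have hC0 : 0 ≤ C := le_trans (abs_nonneg _) (hC x0)
  set E := {y | 0 < bmax T g n y} with hE
  have hEm : MeasurableSet E := measurableSet_lt measurable_const (measurable_bmax hT.measurable hg n)
  set u : α → ℝ := fun x => bmax T g n x - bmax T g n (T x) with hu
  have hum : Measurable u := (measurable_bmax hT.measurable hg n).sub
    ((measurable_bmax hT.measurable hg n).comp hT.measurable)
  have hub : ∀ x, |u x| ≤ n * C + n * C := fun x => by
    have := bmax_abs_le (T := T) hC hC0 n x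
    have := bmax_abs_le (T := T) hC hC0 n (T x)
    rw [hu]; simp only []
    calc |bmax T g n x - bmax T g n (T x)| ≤ |bmax T g n x| + |bmax T g n (T x)| := abs_sub _ _
      _ ≤ n * C + n * C := by linarith
  have huint : Integrable u μ := integrable_of_bdd hum hub
  have hgint : Integrable g μ := integrable_of_bdd hg hC
  -- ∫ u = 0
  have hint0 : ∫ x, u x ∂μ = 0 := by
    have hMint : Integrable (bmax T g n) μ :=
      integrable_of_bdd (measurable_bmax hT.measurable hg n) (bmax_abs_le hC hC0 n)
    have hMTint : Integrable (fun x => bmax T g n (T x)) μ :=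
      integrable_of_bdd ((measurable_bmax hT.measurable hg n).comp hT.measurable)
        (fun x => bmax_abs_le hC hC0 n (T x))
    rw [hu]
    rw [integral_sub hMint hMTint]
    have : ∫ x, bmax T g n (T x) ∂μ = ∫ x, bmax T g n x ∂μ := by
      rw [← integral_map hT.measurable.aemeasurable
        (measurable_bmax hT.measurable hg n).aestronglyMeasurable, hT.map_eq]
    rw [this, sub_self]
  -- on E, u ≤ g; off E, u ≤ 0
  have h1 : ∫ x in E, u x ∂μ ≤ ∫ x in E, g x ∂μ := by
    apply setIntegral_mono_on huint.integrableOn hgint.integrableOn hEm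
    intro x hx
    have := bmax_key (T := T) (g := g) hx
    rw [hu]; simp only []; linarith
  have h2 : ∫ x in Eᶜ, u x ∂μ ≤ 0 := by
    apply setIntegral_nonpos hEm.compl
    intro x hx
    have hx' : ¬ 0 < bmax T g n x := hx
    have h0 : bmax T g n x = 0 := le_antisymm (not_lt.mp hx') (bmax_nonneg g n x)
    rw [hu]; simp only [h0, zero_sub, neg_nonpos]
    exact bmax_nonneg g n (T x)
  have h3 : ∫ x in E, u x ∂μ + ∫ x in Eᶜ, u x ∂μ = ∫ x, u x ∂μ :=
    integral_add_compl hEm huint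
  linarith

lemma bsum_sub_const (g : α → ℝ) (b : ℝ) (k : ℕ) (x : α) :
    bsum T (fun y => g y - b) k x = bsum T g k x - k * b := by
  unfold bsum; rw [Finset.sum_sub_distrib]; simp [mul_comm]

/-- The set of points whose Birkhoff averages of `g` exceed `b'` infinitely often. -/
def Freq (T : α → α) (g : α → ℝ) (b' : ℝ) : Set α :=
  {x | ∀ N : ℕ, ∃ k, N ≤ k ∧ 1 ≤ k ∧ (k : ℝ) * b' < bsum T g k x}

/-- `{x | limsup S_k g x / k > b}`, in a form avoiding limsups. -/
def ELim (T : α → α) (g : α → ℝ) (b : ℝ) : Set α :=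
  ⋃ (b' : ℚ) (_ : b < (b' : ℝ)), Freq T g (b' : ℝ)

lemma measurable_ELim (hT : Measurable T) {g : α → ℝ} (hg : Measurable g) (b : ℝ) :
    MeasurableSet (ELim T g b) := by
  refine MeasurableSet.iUnion fun b' => MeasurableSet.iUnion fun _ => ?_
  have heq : Freq T g (b' : ℝ) =
      ⋂ N : ℕ, ⋃ k : ℕ, ⋃ (_ : N ≤ k ∧ 1 ≤ k), {x | (k : ℝ) * b' < bsum T g k x} := by
    ext x
    simp only [Freq, mem_setOf_eq, mem_iInter, mem_iUnion, exists_prop]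
    constructor
    · intro h N; obtain ⟨k, h1, h2, h3⟩ := h N; exact ⟨k, ⟨h1, h2⟩, h3⟩
    · intro h N; obtain ⟨k, ⟨h1, h2⟩, h3⟩ := h N; exact ⟨k, h1, h2, h3⟩
  rw [heq]
  refine MeasurableSet.iInter fun N => MeasurableSet.iUnion fun k =>
    MeasurableSet.iUnion fun _ => ?_
  exact measurableSet_lt measurable_const (measurable_bsum hT hg k)

lemma freq_step {g : α → ℝ} {C : ℝ} (hC : ∀ x, |g x| ≤ C) {b'' b' : ℝ} (hb : b'' < b')
    {x : α} :
    (T x ∈ Freq T g b' → x ∈ Freq T g b'') ∧ (x ∈ Freq T g b' → T x ∈ Freq T g b'') := by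
  set K : ℕ := ⌈(C + |b''|) / (b' - b'')⌉₊ with hK
  have hkey : ∀ k : ℕ, K ≤ k → C + |b''| ≤ (k : ℝ) * (b' - b'') := by
    intro k hk
    have h1 : (C + |b''|) / (b' - b'') ≤ (K : ℝ) := Nat.le_ceil _
    have h2 : (K : ℝ) ≤ k := by exact_mod_cast hk
    have h3 : (0:ℝ) < b' - b'' := by linarith
    rw [div_le_iff₀ h3] at h1
    nlinarith
  constructor
  · intro hF N
    obtain ⟨k, hk1, hk2, hk3⟩ := hF (max N K)
    refine ⟨k + 1, by omega, by omega, ?_⟩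
    rw [bsum_succ']
    have hk4 : C + |b''| ≤ (k : ℝ) * (b' - b'') := hkey k (le_trans (le_max_right _ _) hk1)
    have := hC x
    have h5 : -C ≤ g x := by cases abs_le.mp this; linarith
    have h6 : b'' ≤ |b''| := le_abs_self _
    push_cast
    nlinarith
  · intro hF N
    obtain ⟨k, hk1, hk2, hk3⟩ := hF (max (N + 1) (max 2 (K + 1)))
    obtain ⟨m, rfl⟩ : ∃ m, k = m + 1 := ⟨k - 1, by omega⟩
    refine ⟨m, by omega, by omega, ?_⟩
    rw [bsum_succ'] at hk3
    have hk4 : C + |b''| ≤ ((m+1 : ℕ) : ℝ) * (b' - b'') := hkey _ (by omega)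
    have := hC x
    have h5 : g x ≤ C := (abs_le.mp this).2
    have h6 : -|b''| ≤ b'' := neg_abs_le _
    push_cast at hk3 hk4 ⊢
    nlinarith

lemma ELim_invariant {g : α → ℝ} {C : ℝ} (hC : ∀ x, |g x| ≤ C) (b : ℝ) :
    T ⁻¹' (ELim T g b) = ELim T g b := by
  ext x
  simp only [mem_preimage, ELim, mem_iUnion]
  constructor
  · rintro ⟨b', hb', hF⟩
    obtain ⟨q, hq1, hq2⟩ := exists_rat_btwn hb'
    exact ⟨q, hq1, (freq_step hC hq2).1 hF⟩
  · rintro ⟨b', hb', hF⟩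
    obtain ⟨q, hq1, hq2⟩ := exists_rat_btwn hb'
    exact ⟨q, hq1, (freq_step hC hq2).2 hF⟩

/-- Upper half of the Birkhoff ergodic theorem for bounded functions. -/
lemma birkhoff_upper (hT : Ergodic T μ) {g : α → ℝ} (hg : Measurable g)
    {C : ℝ} (hC : ∀ x, |g x| ≤ C) {δ : ℝ} (hδ : 0 < δ) :
    ∀ᵐ x ∂μ, ∀ᶠ k in atTop, bsum T g k x ≤ k * (∫ y, g y ∂μ + δ) := by
  set a : ℝ := ∫ y, g y ∂μ with ha
  set b : ℝ := a + δ / 2 with hb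
  -- the bad set has measure zero
  have hbad : μ (ELim T g b) = 0 := by
    rcases hT.toPreErgodic.measure_self_or_compl_eq_zero
      (measurable_ELim hT.measurable hg b) (ELim_invariant hC b) with h | h
    · exact h
    · exfalso
      -- μ (ELim) = 1; contradict maximal ergodic theorem
      set h0 : α → ℝ := fun y => g y - b with hh0
      have hh0m : Measurable h0 := hg.sub measurable_const
      set C' : ℝ := C + |b| + 1 with hC'
      have hC'0 : 0 < C' := by
        obtain ⟨x0, -⟩ : Set.Nonempty (Set.univ : Set α) :=
          MeasureTheory.nonempty_of_measure_ne_zero (by simp : μ Set.univ ≠ 0)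
        have := abs_nonneg (g x0); have := hC x0; have := abs_nonneg b; linarith
      have hh0b : ∀ x, |h0 x| ≤ C' := fun x => by
        have := hC x
        calc |g x - b| ≤ |g x| + |b| := abs_sub _ _
          _ ≤ C' := by linarith
      set E : ℕ → Set α := fun n => {y | 0 < bmax T h0 n y} with hE
      have hEm : ∀ n, MeasurableSet (E n) :=
        fun n => measurableSet_lt measurable_const (measurable_bmax hT.measurable hh0m n)
      have hEmono : Monotone E := by
        intro m n hmn x hx
        have : bmax T h0 m x ≤ bmax T h0 n x := by
          clear hx
          induction n with
          | zero => have : m = 0 := by omega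
                    subst this; exact le_rfl
          | succ n ih =>
            rcases Nat.lt_or_ge m (n + 1) with h | h
            · exact le_trans (ih (by omega)) (le_max_left _ _)
            · have : m = n + 1 := by omega
              subst this; exact le_rfl
        exact lt_of_lt_of_le hx this
      have hsub : ELim T g b ⊆ ⋃ n, E n := by
        intro x hx
        simp only [ELim, mem_iUnion] at hx
        obtain ⟨b', hb', hF⟩ := hx
        obtain ⟨k, _, hk2, hk3⟩ := hF 1
        refine mem_iUnion.mpr ⟨k, ?_⟩
        have h1 : 0 < bsum T h0 k x := by
          rw [hh0, bsum_sub_const]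
          have : (k:ℝ) * b < (k:ℝ) * b' := by
            apply mul_lt_mul_of_pos_left hb'
            exact_mod_cast hk2
          linarith
        exact lt_of_lt_of_le h1 (bsum_le_bmax h0 le_rfl x)
      -- the complements shrink to a null set
      have hcompl : Tendsto (fun n => μ ((E n)ᶜ)) atTop (𝓝 0) := by
        have h1 : μ (⋂ n, (E n)ᶜ) = 0 := by
          have : (⋂ n, (E n)ᶜ) ⊆ (ELim T g b)ᶜ := by
            rw [← compl_iUnion]
            exact compl_subset_compl.mpr hsub
          exact le_antisymm (le_trans (measure_mono this) (le_of_eq h)) zero_le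
        have := tendsto_measure_iInter_atTop
          (μ := μ) (s := fun n => (E n)ᶜ)
          (fun n => (hEm n).compl.nullMeasurableSet)
          (fun m n hmn => compl_subset_compl.mpr (hEmono hmn))
          ⟨0, measure_ne_top _ _⟩
        rwa [h1] at this
      -- bound on ∫ over complement
      have hint : ∫ y, h0 y ∂μ = -(δ/2) := by
        rw [hh0]
        rw [integral_sub (integrable_of_bdd hg hC) (integrable_const b), integral_const]
        simp [hb]
        linarith
      have hlow : ∀ n, δ/2 ≤ C' * (μ ((E n)ᶜ)).toReal := by
        intro n
        have h1 : 0 ≤ ∫ x in E n, h0 x ∂μ := maximal_ergodic hT.toMeasurePreserving hh0m hh0b n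
        have h2 : ∫ x in E n, h0 x ∂μ + ∫ x in (E n)ᶜ, h0 x ∂μ = ∫ x, h0 x ∂μ :=
          integral_add_compl (hEm n) (integrable_of_bdd hh0m hh0b)
        have h3 : ∫ x in (E n)ᶜ, h0 x ∂μ ≤ -(δ/2) := by rw [← hint]; linarith [hint ▸ h2]
        have h4 : |∫ x in (E n)ᶜ, h0 x ∂μ| ≤ C' * (μ ((E n)ᶜ)).toReal := by
          rw [← Real.norm_eq_abs]
          exact norm_setIntegral_le_of_norm_le_const (measure_lt_top _ _)
            (fun x _ => by rw [Real.norm_eq_abs]; exact hh0b x)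
        have h5 : δ/2 ≤ |∫ x in (E n)ᶜ, h0 x ∂μ| := le_abs.mpr (Or.inr (by linarith))
        exact le_trans h5 h4
      -- contradiction
      have : ∀ᶠ n in atTop, μ ((E n)ᶜ) < ENNReal.ofReal (δ/2 / C') := by
        apply hcompl.eventually_lt_const
        simp [ENNReal.ofReal_pos]
        positivity
      obtain ⟨n, hn⟩ := this.exists
      have h6 : (μ ((E n)ᶜ)).toReal < δ/2/C' := by
        rw [← ENNReal.ofReal_lt_ofReal_iff_of_nonneg ENNReal.toReal_nonneg]
        rwa [ENNReal.ofReal_toReal (measure_ne_top _ _)]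
      have := hlow n
      rw [lt_div_iff₀ hC'0] at h6
      nlinarith
  -- conclude: a.e. x is not in ELim, hence eventually below
  filter_upwards [measure_eq_zero_iff_ae_notMem.mp hbad] with x hx
  obtain ⟨q, hq1, hq2⟩ := exists_rat_btwn (show b < a + δ by rw [hb]; linarith)
  simp only [ELim, mem_iUnion, not_exists] at hx
  have hnF : ¬ (x ∈ Freq T g q) := hx q hq1
  simp only [Freq, mem_setOf_eq, not_forall, not_exists] at hnF
  obtain ⟨N, hN⟩ := hnF
  rw [eventually_atTop]
  refine ⟨max N 1, fun k hk => ?_⟩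
  have h1 := hN k
  simp only [not_and, not_lt] at h1
  have h2 : bsum T g k x ≤ (k:ℝ) * q := h1 (le_trans (le_max_left _ _) hk) (le_trans (le_max_right _ _) hk)
  have h3 : (k:ℝ) * q ≤ k * (a + δ) := by
    apply mul_le_mul_of_nonneg_left hq2.le (by positivity)
  linarith



lemma bsum_neg (g : α → ℝ) (k : ℕ) (x : α) :
    bsum T (fun y => -g y) k x = -bsum T g k x := by
  unfold bsum; rw [← Finset.sum_neg_distrib]

/-- Birkhoff's pointwise ergodic theorem, ε-version, for bounded measurable functions. -/
lemma birkhoff_ae (hT : Ergodic T μ) {g : α → ℝ} (hg : Measurable g)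
    {C : ℝ} (hC : ∀ x, |g x| ≤ C) {δ : ℝ} (hδ : 0 < δ) :
    ∀ᵐ x ∂μ, ∀ᶠ k in atTop, |bsum T g k x - k * ∫ y, g y ∂μ| ≤ k * δ := by
  have h1 := birkhoff_upper hT hg hC hδ
  have h2 := birkhoff_upper hT (hg.neg) (g := fun y => -g y)
    (C := C) (fun x => by simpa using hC x) hδ
  filter_upwards [h1, h2] with x hx1 hx2
  filter_upwards [hx1, hx2] with k hk1 hk2
  rw [bsum_neg, integral_neg] at hk2
  rw [abs_le]
  constructor <;> nlinarith

end ErgodicLite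

section ShiftLemmas
variable {N n : ℕ}

lemma shift_iterate (x : ℕ → Fin N) (k i : ℕ) : (Shift^[k] x) i = x (i + k) := by
  induction k generalizing x with
  | zero => simp
  | succ k ih =>
    rw [Function.iterate_succ_apply, ih]
    simp [Shift, Nat.add_assoc, Nat.add_comm 1 k]

lemma measurable_shift : Measurable (Shift : (ℕ → Fin N) → (ℕ → Fin N)) :=
  measurable_pi_lambda _ fun i => measurable_pi_apply (i + 1)

lemma measurableSet_subshift {S : Set (ℕ → Fin N)} (hS : IsSubshiftFT S) :
    MeasurableSet S := by
  obtain ⟨M, rfl⟩ := hS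
  have : {x : ℕ → Fin N | ∀ i, M (x i) (x (i + 1))} =
      ⋂ i, (fun x : ℕ → Fin N => (x i, x (i + 1))) ⁻¹' {p | M p.1 p.2} := by
    ext x; simp
  rw [this]
  exact MeasurableSet.iInter fun i =>
    ((measurable_pi_apply i).prodMk (measurable_pi_apply (i + 1)))
      ((Set.to_countable _).measurableSet)

lemma subshift_shift_mem {S : Set (ℕ → Fin N)} (hS : IsSubshiftFT S) {x : ℕ → Fin N}
    (hx : x ∈ S) : Shift x ∈ S := by
  obtain ⟨M, rfl⟩ := hS
  intro i
  exact hx (i + 1)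

lemma subshift_iterate_mem {S : Set (ℕ → Fin N)} (hS : IsSubshiftFT S) {x : ℕ → Fin N}
    (hx : x ∈ S) (j : ℕ) : Shift^[j] x ∈ S := by
  induction j with
  | zero => exact hx
  | succ j ih => rw [Function.iterate_succ_apply']; exact subshift_shift_mem hS ih

lemma birkhoff_add {E : Type*} [AddCommMonoid E] (f : (ℕ → Fin N) → E) (a b : ℕ)
    (x : ℕ → Fin N) :
    birkhoff (a + b) f x = birkhoff a f x + birkhoff b f (Shift^[a] x) := by
  induction b with
  | zero => simp [birkhoff]
  | succ b ih =>
    rw [show a + (b + 1) = (a + b) + 1 by ring]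
    unfold birkhoff at *
    rw [Finset.sum_range_succ, ih, Finset.sum_range_succ, add_assoc]
    congr 2
    rw [show a + b = b + a by ring, Function.iterate_add_apply]

lemma measurable_birkhoff {E : Type*} [MeasurableSpace E] [AddCommMonoid E]
    [TopologicalSpace E] [BorelSpace E] [ContinuousAdd E] [T2Space E]
    [SecondCountableTopology E]
    {f : (ℕ → Fin N) → E} (hf : Measurable f) (k : ℕ) :
    Measurable (birkhoff (N := N) k f) := by
  apply Finset.measurable_sum
  intro j _
  exact hf.comp (measurable_shift.iterate j)

lemma euclid_sum_apply {β : Type*} (s : Finset β) (f : β → EuclideanSpace ℝ (Fin n))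
    (i : Fin n) : (∑ b ∈ s, f b) i = ∑ b ∈ s, f b i := by
  induction s using Finset.cons_induction with
  | empty => rfl
  | cons a s ha ih =>
    rw [Finset.sum_cons, Finset.sum_cons, ← ih]
    rfl

lemma euclid_abs_coord_le_norm (v : EuclideanSpace ℝ (Fin n)) (i : Fin n) :
    |v i| ≤ ‖v‖ := by
  rw [EuclideanSpace.norm_eq]
  rw [show |v i| = Real.sqrt (‖v i‖ ^ 2) by
    rw [Real.sqrt_sq_eq_abs, Real.norm_eq_abs, abs_abs]]
  apply Real.sqrt_le_sqrt
  exact Finset.single_le_sum (f := fun j => ‖v j‖ ^ 2) (fun j _ => by positivity)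
    (Finset.mem_univ i)

lemma lattice_eq {v : EuclideanSpace ℝ (Fin n)} {q : ℕ} (hq : 0 < q)
    (hv : ∀ i, ∃ z : ℤ, (q : ℝ) * v i = z) (hnorm : ‖v‖ < (q : ℝ)⁻¹) : v = 0 := by
  have hq' : (0:ℝ) < q := by exact_mod_cast hq
  ext i
  obtain ⟨z, hz⟩ := hv i
  have h1 : |v i| < (q:ℝ)⁻¹ := lt_of_le_of_lt (euclid_abs_coord_le_norm v i) hnorm
  have h2 : |(z:ℝ)| < 1 := by
    rw [← hz, abs_mul, abs_of_pos hq']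
    calc (q:ℝ) * |v i| < q * (q:ℝ)⁻¹ := by exact mul_lt_mul_of_pos_left h1 hq'
      _ = 1 := mul_inv_cancel₀ (ne_of_gt hq')
  have h3 : z = 0 := by
    have h4 : |z| < 1 := by exact_mod_cast h2
    rcases abs_lt.mp h4 with ⟨h5, h6⟩
    omega
  have : (q:ℝ) * v i = 0 := by rw [hz, h3]; simp
  have := mul_eq_zero.mp this
  simpa [ne_of_gt hq'] using this

lemma rat_den_dvd_int (s : ℚ) (m : ℕ) (h : s.den ∣ m) : ∃ z : ℤ, (m : ℝ) * (s : ℝ) = z := by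
  obtain ⟨t, rfl⟩ := h
  refine ⟨t * s.num, ?_⟩
  rw [Rat.cast_def]
  have hden : (s.den : ℝ) ≠ 0 := Nat.cast_ne_zero.mpr s.den_nz
  push_cast
  field_simp

end ShiftLemmas


section XiSection
variable {N n : ℕ}

/-- The recurrence refinement operator `Ξ`. -/
def XiSet (f : (ℕ → Fin N) → EuclideanSpace ℝ (Fin n)) (r : EuclideanSpace ℝ (Fin n))
    (D : Set (ℕ → Fin N)) : Set (ℕ → Fin N) :=
  {z ∈ D | ∀ ε > 0, ∃ L : ℕ, 0 < L ∧ Shift^[L] z ∈ D ∧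
    ‖birkhoff L f z - (L : ℝ) • r‖ < ε}

lemma XiSet_subset (f : (ℕ → Fin N) → EuclideanSpace ℝ (Fin n)) (r D) :
    XiSet f r D ⊆ D := fun _ hz => hz.1

lemma measurableSet_XiSet {f : (ℕ → Fin N) → EuclideanSpace ℝ (Fin n)}
    (hf : Measurable f) (r : EuclideanSpace ℝ (Fin n)) {D : Set (ℕ → Fin N)}
    (hD : MeasurableSet D) : MeasurableSet (XiSet f r D) := by
  have key : XiSet f r D = D ∩ ⋂ p : ℕ, ⋃ L : ℕ, ⋃ (_ : 0 < L),
      ((Shift^[L]) ⁻¹' D ∩ {z | ‖birkhoff L f z - (L : ℝ) • r‖ < ((p : ℝ) + 1)⁻¹}) := by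
    ext z
    simp only [XiSet, mem_setOf_eq, mem_inter_iff, mem_iInter, mem_iUnion, mem_preimage,
      Set.mem_sep_iff]
    constructor
    · rintro ⟨hzD, h⟩
      refine ⟨hzD, fun p => ?_⟩
      obtain ⟨L, hL, h1, h2⟩ := h ((p : ℝ) + 1)⁻¹ (by positivity)
      exact ⟨L, hL, h1, h2⟩
    · rintro ⟨hzD, h⟩
      refine ⟨hzD, fun ε hε => ?_⟩
      obtain ⟨p, hp⟩ := exists_nat_gt ε⁻¹
      obtain ⟨L, hL, h1, h2⟩ := h p
      refine ⟨L, hL, h1, lt_of_lt_of_le h2 ?_⟩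
      rw [inv_le_comm₀ (by positivity) hε]
      exact le_trans hp.le (by linarith)
  rw [key]
  apply hD.inter
  refine MeasurableSet.iInter fun p => MeasurableSet.iUnion fun L =>
    MeasurableSet.iUnion fun _ => MeasurableSet.inter ?_ ?_
  · exact (measurable_shift.iterate L) hD
  · exact measurableSet_lt
      ((measurable_birkhoff hf L).sub measurable_const).norm measurable_const

lemma xiIter_subset (f : (ℕ → Fin N) → EuclideanSpace ℝ (Fin n)) (r D) (K : ℕ) :
    (XiSet f r)^[K] D ⊆ D := by
  induction K with
  | zero => exact fun _ h => h
  | succ K ih =>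
    rw [Function.iterate_succ_apply']
    exact fun z hz => ih (XiSet_subset _ _ _ hz)

lemma measurableSet_xiIter {f : (ℕ → Fin N) → EuclideanSpace ℝ (Fin n)}
    (hf : Measurable f) (r : EuclideanSpace ℝ (Fin n)) {D : Set (ℕ → Fin N)}
    (hD : MeasurableSet D) (K : ℕ) : MeasurableSet ((XiSet f r)^[K] D) := by
  induction K with
  | zero => exact hD
  | succ K ih => rw [Function.iterate_succ_apply']; exact measurableSet_XiSet hf r ih

/-- Iterating `Ξ` `K` times yields an exact closing time `Λ ≥ K`. -/
lemma xiIter_return {f : (ℕ → Fin N) → EuclideanSpace ℝ (Fin n)}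
    {r : EuclideanSpace ℝ (Fin n)} {q : ℕ} (hq : 0 < q)
    (hfZ : ∀ x i, ∃ z : ℤ, (q : ℝ) * f x i = z) (hrZ : ∀ i, ∃ z : ℤ, (q : ℝ) * r i = z)
    {D : Set (ℕ → Fin N)} :
    ∀ K, ∀ z ∈ (XiSet f r)^[K] D,
      ∃ Λ : ℕ, K ≤ Λ ∧ Shift^[Λ] z ∈ D ∧ birkhoff Λ f z = (Λ : ℝ) • r := by
  intro K
  induction K with
  | zero =>
    intro z hz
    exact ⟨0, le_rfl, hz, by simp [birkhoff]⟩
  | succ K ih =>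
    intro z hz
    rw [Function.iterate_succ_apply'] at hz
    obtain ⟨hzF, h⟩ := hz
    obtain ⟨L, hL, hshift, hnorm⟩ := h ((q : ℝ))⁻¹ (by positivity)
    -- the lattice constraint forces the Birkhoff sum to be exact
    have hexact : birkhoff L f z = (L : ℝ) • r := by
      have hv : ∀ i, ∃ w : ℤ, (q : ℝ) * (birkhoff L f z - (L : ℝ) • r) i = w := by
        intro i
        obtain ⟨zr, hzr⟩ := hrZ i
        refine ⟨(∑ j ∈ Finset.range L, (hfZ (Shift^[j] z) i).choose) - L * zr, ?_⟩
        have hcoord : (birkhoff L f z - (L : ℝ) • r) i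
            = (∑ j ∈ Finset.range L, f (Shift^[j] z) i) - (L : ℝ) * r i := by
          rw [PiLp.sub_apply, PiLp.smul_apply]
          rw [birkhoff, euclid_sum_apply]
          simp
        rw [hcoord, mul_sub, Finset.mul_sum]
        push_cast
        rw [Finset.sum_congr rfl (fun j _ => (hfZ (Shift^[j] z) i).choose_spec)]
        rw [show (q:ℝ) * ((L:ℝ) * r i) = (L:ℝ) * ((q:ℝ) * r i) by ring, hzr]
      exact sub_eq_zero.mp (lattice_eq hq hv hnorm)
    obtain ⟨Λ', hΛ'K, hΛ'D, hΛ'sum⟩ := ih (Shift^[L] z) hshift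
    refine ⟨L + Λ', by omega, ?_, ?_⟩
    · rw [show L + Λ' = Λ' + L by ring, Function.iterate_add_apply]
      exact hΛ'D
    · rw [birkhoff_add, hexact, hΛ'sum, ← add_smul]
      congr 1
      push_cast
      ring

end XiSection


section OrbitMeasure
open scoped ENNReal
variable {N : ℕ}

lemma sum_shift_rotate {f : ℕ → ℝ≥0∞} {Λ : ℕ} (h : f Λ = f 0) (hfin : f 0 ≠ ⊤) :
    ∑ j ∈ Finset.range Λ, f (j + 1) = ∑ j ∈ Finset.range Λ, f j := by
  have h1 : ∑ i ∈ Finset.range (Λ + 1), f i = (∑ i ∈ Finset.range Λ, f (i + 1)) + f 0 :=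
    Finset.sum_range_succ' f Λ
  have h2 : ∑ i ∈ Finset.range (Λ + 1), f i = (∑ i ∈ Finset.range Λ, f i) + f Λ :=
    Finset.sum_range_succ f Λ
  rw [h] at h2
  have := h1.symm.trans h2
  exact WithTop.add_right_cancel hfin this

/-- The uniform measure on the orbit of a periodic point. -/
noncomputable def orbitMeasure (w : ℕ → Fin N) (Λ : ℕ) : Measure (ℕ → Fin N) :=
  (Λ : ENNReal)⁻¹ • ∑ j ∈ Finset.range Λ, Measure.dirac (Shift^[j] w)

lemma orbitMeasure_apply (w : ℕ → Fin N) (Λ : ℕ) {s : Set (ℕ → Fin N)}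
    (hs : MeasurableSet s) :
    orbitMeasure w Λ s = (Λ : ENNReal)⁻¹ *
      ∑ j ∈ Finset.range Λ, s.indicator 1 (Shift^[j] w) := by
  rw [orbitMeasure, Measure.smul_apply, smul_eq_mul]
  congr 1
  rw [Measure.finset_sum_apply]
  exact Finset.sum_congr rfl fun j _ => Measure.dirac_apply' _ hs

lemma orbitMeasure_isProbability (w : ℕ → Fin N) {Λ : ℕ} (hΛ : 0 < Λ) :
    IsProbabilityMeasure (orbitMeasure w Λ) := by
  constructor
  rw [orbitMeasure_apply w Λ MeasurableSet.univ]
  have : ∀ j ∈ Finset.range Λ, (univ : Set (ℕ → Fin N)).indicator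
      (1 : (ℕ → Fin N) → ℝ≥0∞) (Shift^[j] w) = 1 := fun j _ => by simp
  rw [Finset.sum_congr rfl this, Finset.sum_const, Finset.card_range, nsmul_eq_mul, mul_one]
  exact ENNReal.inv_mul_cancel (by exact_mod_cast hΛ.ne') (ENNReal.natCast_ne_top Λ)

lemma orbitMeasure_shift_invariant (w : ℕ → Fin N) {Λ : ℕ}
    (hper : Shift^[Λ] w = w) :
    (orbitMeasure w Λ).map Shift = orbitMeasure w Λ := by
  refine Measure.ext fun s hs => ?_
  rw [Measure.map_apply measurable_shift hs, orbitMeasure_apply w Λ (measurable_shift hs),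
    orbitMeasure_apply w Λ hs]
  congr 1
  have key : ∀ j : ℕ, (Shift ⁻¹' s).indicator (1 : (ℕ → Fin N) → ℝ≥0∞) (Shift^[j] w)
      = s.indicator 1 (Shift^[j + 1] w) := by
    intro j
    rw [Function.iterate_succ_apply']
    rfl
  rw [Finset.sum_congr rfl fun j _ => key j]
  refine sum_shift_rotate (f := fun j => s.indicator 1 (Shift^[j] w)) ?_ ?_
  · beta_reduce
    rw [hper]
    simp
  · beta_reduce
    exact ne_top_of_le_ne_top ENNReal.one_ne_top (Set.indicator_le_self' (by simp) w)

lemma integrable_dirac'' {α E : Type*} [MeasurableSpace α] [NormedAddCommGroup E]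
    {f : α → E} (hf : StronglyMeasurable f) (a : α) :
    Integrable f (Measure.dirac a) := by
  refine ⟨hf.aestronglyMeasurable, ?_⟩
  rw [HasFiniteIntegral, lintegral_dirac' a hf.enorm]
  exact ENNReal.coe_lt_top

lemma orbitMeasure_integral {E : Type*} [NormedAddCommGroup E] [NormedSpace ℝ E] [CompleteSpace E]
    {f : (ℕ → Fin N) → E} (hf : StronglyMeasurable f) (w : ℕ → Fin N) {Λ : ℕ}
    (hΛ : 0 < Λ) :
    ∫ x, f x ∂(orbitMeasure w Λ) = (Λ : ℝ)⁻¹ • ∑ j ∈ Finset.range Λ, f (Shift^[j] w) := by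
  rw [orbitMeasure, integral_smul_measure]
  rw [integral_finset_sum_measure (fun j _ => integrable_dirac'' hf _)]
  rw [Finset.sum_congr rfl fun j _ => integral_dirac' f _ hf]
  congr 1
  rw [ENNReal.toReal_inv]
  simp

end OrbitMeasure


section Main
open scoped ENNReal

lemma sdist_le_pow {N : ℕ} {lam : ℝ} (hl0 : 0 < lam) (hl1 : lam < 1)
    {x y : ℕ → Fin N} {m : ℕ} (h : ∀ i < m, x i = y i) : sdist lam x y ≤ lam ^ m := by
  unfold sdist
  split
  · exact (pow_pos hl0 m).le
  · rename_i hne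
    apply pow_le_pow_of_le_one hl0.le hl1.le
    refine le_csInf ?_ (fun b hb => ?_)
    · obtain ⟨j, hj⟩ := Function.ne_iff.mp hne
      exact ⟨j, hj⟩
    · by_contra hlt
      push_neg at hlt
      exact hb (h b hlt)

/-- on a subshift of finite type, if `φ` is a locally constant constraint with
rational values, `A` a Walters potential, `r ∈ φ_*(M_σ) ∩ ℚ^n`, and `ν` an ergodic invariant
measure of the subshift with `φ_*(ν) = r` with respect to which `φ` is joint recurrent, then
for every `ε > 0` there is a periodic probability measure `μ` with `φ_*(μ) = r` and
`|∫A dν - ∫A dμ| < ε`. -/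
theorem stmt13 {N n : ℕ} (S : Set (ℕ → Fin N)) (hS : IsSubshiftFT S)
    (lam : ℝ) (hlam0 : 0 < lam) (hlam1 : lam < 1)
    (φ : (ℕ → Fin N) → EuclideanSpace ℝ (Fin n)) (hφm : Measurable φ)
    (hφlc : LocallyConstantFn φ) (hφQ : ∀ x i, ∃ q : ℚ, φ x i = (q : ℝ))
    (A : (ℕ → Fin N) → ℝ) (hAm : Measurable A) (hA : IsWalters S lam A)
    (r : EuclideanSpace ℝ (Fin n)) (hrQ : ∀ i, ∃ q : ℚ, r i = (q : ℝ))
    (ν : ProbabilityMeasure (ℕ → Fin N)) (hν : ν ∈ MS S)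
    (hνerg : Ergodic Shift (ν : Measure (ℕ → Fin N)))
    (hνr : ∫ x, φ x ∂(ν : Measure (ℕ → Fin N)) = r)
    (hjr : JointRec φ (ν : Measure (ℕ → Fin N)))
    (ε : ℝ) (hε : 0 < ε) :
    ∃ μ : ProbabilityMeasure (ℕ → Fin N), μ ∈ MS S ∧ IsPeriodicMeasure S μ ∧
      ∫ x, φ x ∂(μ : Measure (ℕ → Fin N)) = r ∧
      |∫ x, A x ∂(ν : Measure (ℕ → Fin N)) - ∫ x, A x ∂(μ : Measure (ℕ → Fin N))| < ε := by
  classical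
  obtain ⟨j₀, hj₀⟩ := hφlc
  obtain ⟨H, hHmono, hH0, hHtend, hHW⟩ := hA
  set νm : Measure (ℕ → Fin N) := (ν : Measure (ℕ → Fin N)) with hνmdef
  haveI : IsProbabilityMeasure νm := ν.prop
  have hSmeas : MeasurableSet S := measurableSet_subshift hS
  have hνS : νm S = 1 := hν.2
  have hνSc : νm Sᶜ = 0 := by
    have h1 := measure_compl hSmeas (measure_ne_top νm S)
    rw [hνS, measure_univ] at h1
    simpa using h1
  obtain ⟨xS, hxS⟩ : S.Nonempty :=
    nonempty_of_measure_ne_zero (show νm S ≠ 0 by rw [hνS]; exact one_ne_zero)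
  -- the Walters modulus along the scales lam^m
  have hpow : Tendsto (fun m : ℕ => lam ^ m) atTop (𝓝[>] (0:ℝ)) := by
    apply tendsto_nhdsWithin_of_tendsto_nhds_of_eventually_within
    · exact tendsto_pow_atTop_nhds_zero_of_lt_one hlam0.le hlam1
    · exact Eventually.of_forall fun m => pow_pos hlam0 m
  have hHp : Tendsto (fun m : ℕ => H (lam ^ m)) atTop (𝓝 0) := hHtend.comp hpow
  -- A is bounded on S
  obtain ⟨m₁, hm₁⟩ : ∃ m₁ : ℕ, H (lam ^ m₁) < ⊤ :=
    (hHp.eventually (eventually_lt_nhds (show (0:ℝ≥0∞) < ⊤ by simp))).exists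
  haveI : Nonempty (Fin m₁ → Fin N) := ⟨fun _ => xS 0⟩
  set rep : (Fin m₁ → Fin N) → (ℕ → Fin N) := fun c =>
    if h : ∃ x, x ∈ S ∧ ∀ i : Fin m₁, x (i : ℕ) = c i then h.choose else xS with hrepdef
  have hrep : ∀ c, (∃ x, x ∈ S ∧ ∀ i : Fin m₁, x (i : ℕ) = c i) →
      rep c ∈ S ∧ ∀ i : Fin m₁, rep c (i : ℕ) = c i := by
    intro c h
    rw [hrepdef]
    simp only [dif_pos h]
    exact h.choose_spec
  set CA : ℝ := (Finset.univ.sup' Finset.univ_nonempty fun c => |A (rep c)|)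
    + (H (lam ^ m₁)).toReal with hCAdef
  have hCA : ∀ x ∈ S, |A x| ≤ CA := by
    intro x hx
    set c : Fin m₁ → Fin N := fun i => x (i : ℕ) with hcdef
    obtain ⟨h1, h2⟩ := hrep c ⟨x, hx, fun i => rfl⟩
    have hagree : ∀ i < m₁, x i = rep c i := by
      intro i hi
      rw [h2 ⟨i, hi⟩]
    have hd : ∀ j < 1, sdist lam (Shift^[j] x) (Shift^[j] (rep c)) ≤ lam ^ m₁ := by
      intro j hj
      interval_cases j
      simpa using sdist_le_pow hlam0 hlam1 hagree
    have hW := hHW (lam ^ m₁) (pow_pos hlam0 _).le 1 one_pos x hx (rep c) h1 hd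
    have hb1 : ∀ y, birkhoff 1 A y = A y := fun y => by simp [birkhoff]
    rw [hb1, hb1] at hW
    have h3 : |A x - A (rep c)| ≤ (H (lam ^ m₁)).toReal :=
      (ENNReal.ofReal_le_iff_le_toReal hm₁.ne).mp hW
    have h4 : |A (rep c)| ≤ Finset.univ.sup' Finset.univ_nonempty fun c => |A (rep c)| :=
      Finset.le_sup' (f := fun c => |A (rep c)|) (Finset.mem_univ c)
    have h5 : |A x| - |A (rep c)| ≤ |A x - A (rep c)| := abs_sub_abs_le_abs_sub _ _
    rw [hCAdef]
    linarith
  -- truncate A outside S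
  set A' : (ℕ → Fin N) → ℝ := fun x => if x ∈ S then A x else 0 with hA'def
  have hA'm : Measurable A' := Measurable.ite hSmeas hAm measurable_const
  set CA' : ℝ := max CA 0 with hCA'def
  have hA'b : ∀ x, |A' x| ≤ CA' := by
    intro x
    rw [hA'def]
    simp only []
    split
    · exact le_trans (hCA x (by assumption)) (le_max_left _ _)
    · simp [hCA'def]
  have hA'ae : A' =ᵐ[νm] A := by
    have h1 : ∀ᵐ x ∂νm, x ∈ S := by
      rw [ae_iff]
      convert hνSc using 2
      rfl
    filter_upwards [h1] with x hx
    rw [hA'def]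
    simp [hx]
  have haa' : ∫ y, A' y ∂νm = ∫ x, A x ∂νm := integral_congr_ae hA'ae
  set a' : ℝ := ∫ y, A' y ∂νm with ha'def
  -- Birkhoff ergodic theorem for A'
  have hδ3 : (0:ℝ) < ε / 3 := by positivity
  have hbirk : ∀ᵐ x ∂νm, ∀ᶠ k in atTop, |birkhoff k A' x - k * a'| ≤ k * (ε/3) :=
    birkhoff_ae hνerg hA'm hA'b hδ3
  set G : ℕ → Set (ℕ → Fin N) :=
    fun K => {x | ∀ k, K ≤ k → |birkhoff k A' x - k * a'| ≤ k * (ε/3)} with hGdef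
  have hGmeas : ∀ K, MeasurableSet (G K) := by
    intro K
    have : G K = ⋂ k, ⋂ (_ : K ≤ k),
        {x | |birkhoff k A' x - k * a'| ≤ k * (ε/3)} := by
      ext x
      simp [hGdef, mem_iInter]
    rw [this]
    refine MeasurableSet.iInter fun k => MeasurableSet.iInter fun _ => ?_
    exact measurableSet_le (((measurable_birkhoff hA'm k).sub measurable_const).abs)
      measurable_const
  have hGmono : Monotone G := by
    intro K K' hKK' x hx k hk
    exact hx k (le_trans hKK' hk)
  have hGU : 0 < νm (⋃ K, G K) := by
    have h1 : ∀ᵐ x ∂νm, x ∈ ⋃ K, G K := by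
      filter_upwards [hbirk] with x hx
      obtain ⟨K, hK⟩ := eventually_atTop.mp hx
      exact mem_iUnion.mpr ⟨K, fun k hk => hK k hk⟩
    have h3 : νm {x | ¬ x ∈ ⋃ K, G K} = 0 := ae_iff.mp h1
    have h4 : νm univ ≤ νm (⋃ K, G K) + νm {x | ¬ x ∈ ⋃ K, G K} := by
      refine le_trans (measure_mono ?_) (measure_union_le _ _)
      intro x _
      by_cases h : x ∈ ⋃ K, G K
      · exact Or.inl h
      · exact Or.inr h
    rw [h3, add_zero, measure_univ] at h4
    exact lt_of_lt_of_le (by simp) h4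
  obtain ⟨K₀, hK₀⟩ : ∃ K₀, 0 < νm (G K₀) :=
    ((tendsto_measure_iUnion_atTop hGmono).eventually (eventually_gt_nhds hGU)).exists
  set K : ℕ := max K₀ 1 with hKdef
  have hK1 : 1 ≤ K := le_max_right _ _
  have hGK : 0 < νm (G K) := lt_of_lt_of_le hK₀ (measure_mono (hGmono (le_max_left _ _)))
  have hSGK : νm (S ∩ G K) ≠ 0 := by
    intro h0
    have h1 : G K ⊆ (S ∩ G K) ∪ Sᶜ := by
      intro x hx
      by_cases hxs : x ∈ S
      · exact Or.inl ⟨hxs, hx⟩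
      · exact Or.inr hxs
    have h2 : νm (G K) ≤ νm (S ∩ G K) + νm Sᶜ := le_trans (measure_mono h1) (measure_union_le _ _)
    rw [h0, hνSc] at h2
    simp at h2
    exact absurd h2 (ne_of_gt hGK)
  -- common denominator q
  set ext0 : (Fin (j₀ + 1) → Fin N) → (ℕ → Fin N) := fun w i =>
    if h : i < j₀ + 1 then w ⟨i, h⟩ else w ⟨0, Nat.succ_pos _⟩ with hext0def
  have hext : ∀ x : ℕ → Fin N, φ x = φ (ext0 (fun t : Fin (j₀ + 1) => x (t : ℕ))) := by
    intro x
    apply hj₀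
    intro i hi
    rw [hext0def]
    simp only []
    rw [dif_pos (by omega : i < j₀ + 1)]
  set qφ : ((Fin (j₀ + 1) → Fin N) × Fin n) → ℚ :=
    fun p => (hφQ (ext0 p.1) p.2).choose with hqφdef
  set qr : Fin n → ℚ := fun i => (hrQ i).choose with hqrdef
  set q : ℕ := (∏ p : ((Fin (j₀ + 1) → Fin N) × Fin n), (qφ p).den)
    * ∏ i : Fin n, (qr i).den with hqdef
  have hqpos : 0 < q := by
    apply mul_pos <;> exact Finset.prod_pos fun _ _ => Rat.den_pos _
  have hφZ : ∀ x i, ∃ z : ℤ, (q : ℝ) * φ x i = z := by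
    intro x i
    have h1 : φ x i = ((qφ (fun t : Fin (j₀+1) => x (t : ℕ), i) : ℚ) : ℝ) := by
      rw [hext x]
      simp only [hqφdef]
      exact (hφQ (ext0 (fun t : Fin (j₀+1) => x (t : ℕ))) i).choose_spec
    rw [h1]
    apply rat_den_dvd_int
    rw [hqdef]
    exact dvd_mul_of_dvd_left (Finset.dvd_prod_of_mem _ (Finset.mem_univ _)) _
  have hrZ : ∀ i, ∃ z : ℤ, (q : ℝ) * r i = z := by
    intro i
    rw [(hrQ i).choose_spec]
    apply rat_den_dvd_int
    rw [hqdef]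
    exact dvd_mul_of_dvd_right (Finset.dvd_prod_of_mem _ (Finset.mem_univ _)) _
  -- choose the cylinder length m
  obtain ⟨mA, hmA⟩ : ∃ mA : ℕ, H (lam ^ mA) < ENNReal.ofReal (ε/3) :=
    (hHp.eventually (eventually_lt_nhds (by simp [ENNReal.ofReal_pos, hδ3]))).exists
  set m : ℕ := max (max (j₀ + 1) mA) 1 with hmdef
  have hmj : j₀ + 1 ≤ m := le_trans (le_max_left _ _) (le_max_left _ _)
  have hmA' : mA ≤ m := le_trans (le_max_right _ _) (le_max_left _ _)
  have hm1 : 1 ≤ m := le_max_right _ _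
  -- choose a positive-measure cylinder
  set P : (Fin m → Fin N) → Set (ℕ → Fin N) :=
    fun c => {x | ∀ i : Fin m, x (i : ℕ) = c i} with hPdef
  have hPmeas : ∀ c, MeasurableSet (P c) := by
    intro c
    have : P c = ⋂ i : Fin m, (fun x : ℕ → Fin N => x (i : ℕ)) ⁻¹' {c i} := by
      ext x; simp [hPdef]
    rw [this]
    exact MeasurableSet.iInter fun i => (measurable_pi_apply _) (measurableSet_singleton _)
  obtain ⟨c, hc⟩ : ∃ c, νm (P c ∩ (S ∩ G K)) ≠ 0 := by
    by_contra h0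
    push_neg at h0
    have h1 : S ∩ G K ⊆ ⋃ c, P c ∩ (S ∩ G K) := by
      intro x hx
      exact mem_iUnion.mpr ⟨fun i => x (i : ℕ), ⟨fun i => rfl, hx⟩⟩
    have h2 : νm (S ∩ G K) ≤ ∑' c, νm (P c ∩ (S ∩ G K)) :=
      le_trans (measure_mono h1) (measure_iUnion_le _)
    simp only [h0] at h2
    rw [tsum_zero] at h2
    exact hSGK (le_antisymm h2 zero_le)
  set D : Set (ℕ → Fin N) := P c ∩ (S ∩ G K) with hDdef
  have hDmeas : MeasurableSet D := (hPmeas c).inter (hSmeas.inter (hGmeas K))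
  -- the jr hypothesis in XiSet form
  have hjr' : ∀ E : Set (ℕ → Fin N), MeasurableSet E → νm (XiSet φ r E) = νm E := by
    intro E hE
    have h := hjr E hE
    rw [hνr] at h
    exact h
  have hFmeas : ∀ K', MeasurableSet ((XiSet φ r)^[K'] D) := fun K' =>
    measurableSet_xiIter hφm r hDmeas K'
  have hFν : νm ((XiSet φ r)^[K] D) = νm D := by
    have key : ∀ K', νm ((XiSet φ r)^[K'] D) = νm D := by
      intro K'
      induction K' with
      | zero => rfl
      | succ K' ih =>
        rw [Function.iterate_succ_apply', hjr' _ (hFmeas K')]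
        exact ih
    exact key K
  obtain ⟨z, hz⟩ : Set.Nonempty ((XiSet φ r)^[K] D) :=
    nonempty_of_measure_ne_zero (show νm _ ≠ 0 by rw [hFν]; exact hc)
  obtain ⟨Λ, hΛK, hΛD, hΛsum⟩ := xiIter_return hqpos hφZ hrZ K z hz
  have hzD : z ∈ D := xiIter_subset φ r D K hz
  have hzP : z ∈ P c := hzD.1
  have hzS : z ∈ S := hzD.2.1
  have hzG : z ∈ G K := hzD.2.2
  have hΛ1 : 1 ≤ Λ := le_trans hK1 hΛK
  have hΛ0 : 0 < Λ := hΛ1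
  have hretP : Shift^[Λ] z ∈ P c := hΛD.1
  -- the cylinder-return property
  have hzc : ∀ i < m, z (Λ + i) = z i := by
    intro i hi
    have h1 : z (i : ℕ) = c ⟨i, hi⟩ := hzP ⟨i, hi⟩
    have h2 : (Shift^[Λ] z) (i : ℕ) = c ⟨i, hi⟩ := hretP ⟨i, hi⟩
    rw [shift_iterate] at h2
    rw [Nat.add_comm, h2, h1]
  -- the periodic point
  set w : ℕ → Fin N := fun i => z (i % Λ) with hwdef
  have hag : ∀ s, s < Λ + m → z (s % Λ) = z s := by
    intro s
    induction s using Nat.strong_induction_on with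
    | _ s ih =>
      intro hs
      rcases Nat.lt_or_ge s Λ with h | h
      · rw [Nat.mod_eq_of_lt h]
      · have hu : s - Λ < m := by omega
        have h1 : z s = z (s - Λ) := by
          have h2 := hzc (s - Λ) hu
          rw [show Λ + (s - Λ) = s by omega] at h2
          exact h2
        have h2 : z ((s - Λ) % Λ) = z (s - Λ) := ih (s - Λ) (by omega) (by omega)
        have h3 : s % Λ = (s - Λ) % Λ := by
          conv_lhs => rw [show s = Λ + (s - Λ) by omega]
          exact Nat.add_mod_left Λ _
        rw [h3, h2, h1]
  have hwz : ∀ s, s < Λ + m → w s = z s := fun s hs => hag s hs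
  have hz0 : z Λ = z 0 := by
    have h1 := hzc 0 (by omega)
    simpa using h1
  have hwS : w ∈ S := by
    have hS' := hS
    obtain ⟨M0, hSM0⟩ := hS'
    have hzS' : ∀ i, M0 (z i) (z (i + 1)) := by
      have h1 := hzS
      rw [hSM0] at h1
      exact h1
    rw [hSM0]
    intro i
    have ht : i % Λ < Λ := Nat.mod_lt _ hΛ0
    show M0 (z (i % Λ)) (z ((i + 1) % Λ))
    rcases Nat.lt_or_ge (i % Λ + 1) Λ with h | h
    · have h1 : (i + 1) % Λ = i % Λ + 1 := by
        rw [Nat.add_mod]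
        rw [Nat.mod_eq_of_lt (show 1 < Λ by omega)]
        exact Nat.mod_eq_of_lt h
      rw [h1]
      exact hzS' (i % Λ)
    · have heq : i % Λ + 1 = Λ := by omega
      have h1 : (i + 1) % Λ = 0 := by
        rw [Nat.add_mod]
        rcases Nat.lt_or_ge 1 Λ with h2 | h2
        · rw [Nat.mod_eq_of_lt h2, heq, Nat.mod_self]
        · have h3 : Λ = 1 := by omega
          subst h3
          simp [Nat.mod_one]
      rw [h1]
      have h2 := hzS' (i % Λ)
      rw [heq, hz0] at h2
      exact h2
  have hwper : Shift^[Λ] w = w := by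
    funext i
    rw [shift_iterate]
    show z ((i + Λ) % Λ) = z (i % Λ)
    rw [Nat.add_mod_right]
  -- φ along the periodic orbit
  have hφorb : birkhoff Λ φ w = birkhoff Λ φ z := by
    unfold birkhoff
    refine Finset.sum_congr rfl fun i hi => ?_
    rw [Finset.mem_range] at hi
    apply hj₀
    intro t ht
    rw [shift_iterate, shift_iterate]
    exact hwz (t + i) (by omega)
  -- A along the periodic orbit (Walters)
  have hsd : ∀ jj < Λ, sdist lam (Shift^[jj] z) (Shift^[jj] w) ≤ lam ^ m := by
    intro jj hjj
    apply sdist_le_pow hlam0 hlam1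
    intro t ht
    rw [shift_iterate, shift_iterate]
    exact (hwz (t + jj) (by omega)).symm
  have hWz := hHW (lam ^ m) (pow_pos hlam0 m).le Λ hΛ0 z hzS w hwS hsd
  have hAzw : |birkhoff Λ A z - birkhoff Λ A w| < ε / 3 := by
    have h1 : H (lam ^ m) ≤ H (lam ^ mA) :=
      hHmono (pow_le_pow_of_le_one hlam0.le hlam1.le hmA')
    have h2 := lt_of_le_of_lt (hWz.trans h1) hmA
    rwa [ENNReal.ofReal_lt_ofReal_iff hδ3] at h2
  -- A' vs A along the orbit of z
  have hA'z : birkhoff Λ A' z = birkhoff Λ A z := by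
    unfold birkhoff
    refine Finset.sum_congr rfl fun j _ => ?_
    rw [hA'def]
    simp only []
    rw [if_pos (subshift_iterate_mem hS hzS j)]
  have hGz : |birkhoff Λ A z - Λ * a'| ≤ Λ * (ε/3) := by
    have h1 := hzG Λ hΛK
    rwa [hA'z] at h1
  -- the periodic measure
  haveI hprob := orbitMeasure_isProbability w hΛ0
  set μP : ProbabilityMeasure (ℕ → Fin N) := ⟨orbitMeasure w Λ, hprob⟩ with hμPdef
  have hμPcoe : (μP : Measure (ℕ → Fin N)) = orbitMeasure w Λ := rfl
  have horbS : ∀ j, Shift^[j] w ∈ S := subshift_iterate_mem hS hwS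
  have hμPS : (μP : Measure (ℕ → Fin N)) S = 1 := by
    rw [hμPcoe, orbitMeasure_apply w Λ hSmeas]
    have h1 : ∀ j ∈ Finset.range Λ, S.indicator (1 : (ℕ → Fin N) → ℝ≥0∞) (Shift^[j] w)
        = 1 := fun j _ => by simp [Set.indicator_of_mem (horbS j)]
    rw [Finset.sum_congr rfl h1, Finset.sum_const, Finset.card_range, nsmul_eq_mul, mul_one]
    exact ENNReal.inv_mul_cancel (by exact_mod_cast hΛ0.ne') (ENNReal.natCast_ne_top Λ)
  have hΛR : (1:ℝ) ≤ (Λ:ℝ) := by exact_mod_cast hΛ1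
  have hΛR0 : (0:ℝ) < (Λ:ℝ) := by linarith
  have hintφ : ∫ x, φ x ∂(μP : Measure (ℕ → Fin N)) = r := by
    rw [hμPcoe, orbitMeasure_integral hφm.stronglyMeasurable w hΛ0]
    have h1 : ∑ j ∈ Finset.range Λ, φ (Shift^[j] w) = birkhoff Λ φ w := rfl
    rw [h1, hφorb, hΛsum, smul_smul, inv_mul_cancel₀ (ne_of_gt hΛR0), one_smul]
  have hintA : ∫ x, A x ∂(μP : Measure (ℕ → Fin N)) = (Λ:ℝ)⁻¹ * birkhoff Λ A w := by
    rw [hμPcoe, orbitMeasure_integral hAm.stronglyMeasurable w hΛ0]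
    rfl
  refine ⟨μP, ⟨?_, hμPS⟩, ⟨w, hwS, Λ, hΛ0, hwper, hμPcoe⟩, hintφ, ?_⟩
  · rw [hμPcoe]
    exact orbitMeasure_shift_invariant w hwper
  · rw [hintA]
    set aR : ℝ := ∫ x, A x ∂νm with haRdef
    have ha'aR : a' = aR := haa'
    set u : ℝ := birkhoff Λ A z with hudef
    set v : ℝ := birkhoff Λ A w with hvdef
    have h1 : |u - (Λ:ℝ) * aR| ≤ (Λ:ℝ) * (ε/3) := by rw [← ha'aR]; exact hGz
    have h2 : |(Λ:ℝ) * aR - v| < (Λ:ℝ) * (2*ε/3) := by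
      calc |(Λ:ℝ) * aR - v| ≤ |(Λ:ℝ) * aR - u| + |u - v| := abs_sub_le _ _ _
        _ < (Λ:ℝ) * (ε/3) + ε/3 := by
              rw [abs_sub_comm ((Λ:ℝ) * aR) u]
              exact add_lt_add_of_le_of_lt h1 hAzw
        _ ≤ (Λ:ℝ) * (2*ε/3) := by nlinarith
    have h3 : |aR - (Λ:ℝ)⁻¹ * v| = (Λ:ℝ)⁻¹ * |(Λ:ℝ) * aR - v| := by
      rw [show aR - (Λ:ℝ)⁻¹ * v = (Λ:ℝ)⁻¹ * ((Λ:ℝ) * aR - v) by field_simp, abs_mul,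
        abs_of_pos (inv_pos.mpr hΛR0)]
    calc |aR - (Λ:ℝ)⁻¹ * v| = (Λ:ℝ)⁻¹ * |(Λ:ℝ) * aR - v| := h3
      _ < (Λ:ℝ)⁻¹ * ((Λ:ℝ) * (2*ε/3)) := by
          exact mul_lt_mul_of_pos_left h2 (inv_pos.mpr hΛR0)
      _ = 2*ε/3 := by field_simp
      _ < ε := by linarith

end Main
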